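/- For p = 3/2 and n = 3 (so p' = 3 = n): μ(3,3) = ν(3,3) = (1/4)·π_{3/2,3}·sec(π/3) = (1/2)·π_{3/2,3}; i.e., ∫₁^∞ (t³-1)^{-2/3} dt = ∫₀^∞ (1+t³)^{-2/3} dt = ∫₀¹ (1-t³)^{-2/3} dt. -/

import Mathlib

open Real MeasureTheory Set

lemma inv_image_Ioo : (fun x : ℝ => x⁻¹) '' Ioo 0 1 = Ioi 1 := by
  ext y
  constructor
  · rintro ⟨x, ⟨hx0, hx1⟩, rfl⟩
    exact (one_lt_inv₀ hx0).2 hx1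
  · intro hy
    have hy0 : (0:ℝ) < y := lt_trans one_pos hy
    exact ⟨y⁻¹, ⟨inv_pos.2 hy0, (inv_lt_one₀ hy0).2 hy⟩, inv_inv y⟩

lemma step1 :
    (∫ t in Ioi (1:ℝ), (t ^ 3 - 1) ^ (-(2/3 : ℝ)))
      = ∫ x in Ioo (0:ℝ) 1, (1 - x ^ 3) ^ (-(2/3 : ℝ)) := by
  have hderiv : ∀ x ∈ Ioo (0:ℝ) 1,
      HasDerivWithinAt (fun x : ℝ => x⁻¹) (-((x^2)⁻¹)) (Ioo 0 1) x := by
    intro x hx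
    exact (hasDerivAt_inv hx.1.ne').hasDerivWithinAt
  have hinj : InjOn (fun x : ℝ => x⁻¹) (Ioo 0 1) :=
    fun x _ y _ h => inv_injective h
  have := integral_image_eq_integral_abs_deriv_smul measurableSet_Ioo hderiv hinj
    (fun t : ℝ => (t ^ 3 - 1) ^ (-(2/3 : ℝ)))
  rw [inv_image_Ioo] at this
  rw [this]
  apply setIntegral_congr_fun measurableSet_Ioo
  intro x hx
  obtain ⟨hx0, hx1⟩ := hx
  have hu : (0:ℝ) < 1 - x ^ 3 := by nlinarith [pow_lt_one₀ hx0.le hx1 (three_ne_zero (α := ℕ))]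
  have hx3 : (0:ℝ) < x ^ 3 := by positivity
  simp only [smul_eq_mul]
  have h1 : (x⁻¹) ^ 3 - 1 = (1 - x ^ 3) / x ^ 3 := by
    field_simp
  rw [h1, abs_of_nonpos (neg_nonpos.2 (by positivity : (0:ℝ) ≤ (x^2)⁻¹)), neg_neg,
    Real.div_rpow hu.le hx3.le]
  have h2 : (x ^ 3 : ℝ) ^ (-(2/3 : ℝ)) = (x ^ 2)⁻¹ := by
    rw [← Real.rpow_natCast x 3, ← Real.rpow_mul hx0.le, ← Real.rpow_natCast x 2,
      ← Real.rpow_neg hx0.le]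
    norm_num
  rw [h2]
  field_simp

lemma f2_image : (fun x : ℝ => x * (1 - x ^ 3) ^ (-(1/3) : ℝ)) '' Ioo 0 1 = Ioi 0 := by
  ext y
  constructor
  · rintro ⟨x, ⟨hx0, hx1⟩, rfl⟩
    have hu : (0:ℝ) < 1 - x ^ 3 := by
      nlinarith [pow_lt_one₀ hx0.le hx1 (three_ne_zero (α := ℕ))]
    exact mul_pos hx0 (Real.rpow_pos_of_pos hu _)
  · intro hy
    have hy0 : (0:ℝ) < y := hy
    have h1y : (0:ℝ) < 1 + y ^ 3 := by positivity
    refine ⟨y * (1 + y ^ 3) ^ (-(1/3) : ℝ), ⟨?_, ?_⟩, ?_⟩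
    · exact mul_pos hy0 (Real.rpow_pos_of_pos h1y _)
    · -- y * (1+y³)^(-1/3) < 1  ⟺  y < (1+y³)^{1/3}
      have hlt : y < (1 + y ^ 3) ^ ((1/3) : ℝ) := by
        have : (y ^ 3 : ℝ) < 1 + y ^ 3 := by nlinarith
        calc y = (y ^ 3 : ℝ) ^ ((1/3) : ℝ) := by
                rw [← Real.rpow_natCast y 3, ← Real.rpow_mul hy0.le]; norm_num
          _ < (1 + y ^ 3) ^ ((1/3) : ℝ) :=
                Real.rpow_lt_rpow (by positivity) this (by norm_num)
      have hpos : (0:ℝ) < (1 + y ^ 3) ^ ((1/3) : ℝ) := Real.rpow_pos_of_pos h1y _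
      rw [Real.rpow_neg h1y.le]
      rw [← div_eq_mul_inv, div_lt_one hpos]
      exact hlt
    · -- f (y (1+y³)^{-1/3}) = y
      set x := y * (1 + y ^ 3) ^ (-(1/3) : ℝ) with hxdef
      have hx3 : x ^ 3 = y ^ 3 / (1 + y ^ 3) := by
        rw [hxdef, mul_pow, ← Real.rpow_natCast ((1 + y^3) ^ (-(1/3):ℝ)) 3,
          ← Real.rpow_mul h1y.le]
        norm_num
        rw [Real.rpow_neg_one]
        ring
      have hu : 1 - x ^ 3 = (1 + y ^ 3)⁻¹ := by
        rw [hx3]; field_simp; ring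
      show x * (1 - x ^ 3) ^ (-(1/3) : ℝ) = y
      rw [hu, ← Real.rpow_neg_one (1 + y ^ 3), ← Real.rpow_mul h1y.le]
      rw [hxdef, mul_assoc, ← Real.rpow_add h1y]
      norm_num

lemma step2 :
    (∫ t in Ioi (0:ℝ), (1 + t ^ 3) ^ (-(2/3 : ℝ)))
      = ∫ x in Ioo (0:ℝ) 1, (1 - x ^ 3) ^ (-(2/3 : ℝ)) := by
  set f : ℝ → ℝ := fun x => x * (1 - x ^ 3) ^ (-(1/3) : ℝ) with hf
  set f' : ℝ → ℝ := fun x => (1 - x ^ 3) ^ (-(1/3) : ℝ) + x ^ 3 * (1 - x ^ 3) ^ (-(4/3) : ℝ)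
    with hf'
  have hu : ∀ x ∈ Ioo (0:ℝ) 1, (0:ℝ) < 1 - x ^ 3 := by
    rintro x ⟨hx0, hx1⟩
    nlinarith [pow_lt_one₀ hx0.le hx1 (three_ne_zero (α := ℕ))]
  have hderiv : ∀ x ∈ Ioo (0:ℝ) 1, HasDerivWithinAt f (f' x) (Ioo 0 1) x := by
    intro x hx
    have hux := hu x hx
    have h1 : HasDerivAt (fun x : ℝ => 1 - x ^ 3) (-(3 * x ^ 2)) x := by
      simpa using ((hasDerivAt_pow 3 x).const_sub 1)
    have h2 : HasDerivAt (fun x : ℝ => (1 - x ^ 3) ^ (-(1/3) : ℝ))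
        ((-(1/3) : ℝ) * (1 - x ^ 3) ^ ((-(1/3) : ℝ) - 1) * (-(3 * x ^ 2))) x :=
      by have := (Real.hasDerivAt_rpow_const (x := 1 - x ^ 3) (p := (-(1/3) : ℝ)) (Or.inl hux.ne')).comp x h1; exact this
    have h3 := (hasDerivAt_id x).mul h2
    have heq : f' x = 1 * (1 - x ^ 3) ^ (-(1/3) : ℝ)
        + id x * ((-(1/3) : ℝ) * (1 - x ^ 3) ^ ((-(1/3) : ℝ) - 1) * (-(3 * x ^ 2))) := by
      have e : ((-(1/3) : ℝ) - 1) = (-(4/3) : ℝ) := by norm_num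
      simp only [hf', e, id]
      ring
    have h4 : HasDerivAt f (f' x) x := by rw [heq]; exact h3
    exact h4.hasDerivWithinAt
  have hinj : InjOn f (Ioo 0 1) := by
    have hmono : StrictMonoOn f (Ioo (0:ℝ) 1) := by
      intro x hx y hy hxy
      have hux := hu x hx
      have huy := hu y hy
      have h1 : (1 - y ^ 3 : ℝ) < 1 - x ^ 3 := by
        nlinarith [pow_lt_pow_left₀ hxy hx.1.le (n := 3) (by norm_num)]
      have h2 : (1 - x ^ 3 : ℝ) ^ (-(1/3) : ℝ) < (1 - y ^ 3) ^ (-(1/3) : ℝ) :=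
        Real.rpow_lt_rpow_of_neg huy h1 (by norm_num)
      have h3 : (0:ℝ) < (1 - x ^ 3) ^ (-(1/3) : ℝ) := Real.rpow_pos_of_pos hux _
      calc f x = x * (1 - x ^ 3) ^ (-(1/3) : ℝ) := rfl
        _ < y * (1 - y ^ 3) ^ (-(1/3) : ℝ) := by
            apply mul_lt_mul' hxy.le h2 h3.le (lt_trans hx.1 hxy)
        _ = f y := rfl
    exact hmono.injOn
  have := integral_image_eq_integral_abs_deriv_smul measurableSet_Ioo hderiv hinj
    (fun t : ℝ => (1 + t ^ 3) ^ (-(2/3 : ℝ)))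
  rw [show f '' Ioo 0 1 = Ioi 0 from f2_image] at this
  rw [this]
  apply setIntegral_congr_fun measurableSet_Ioo
  intro x hx
  have hux := hu x hx
  have hx0 := hx.1
  simp only [smul_eq_mul]
  -- f' x = (1-x³)^(-4/3)
  have hfp : f' x = (1 - x ^ 3) ^ (-(4/3) : ℝ) := by
    simp only [hf']
    have : (1 - x ^ 3 : ℝ) ^ (-(1/3) : ℝ)
        = (1 - x ^ 3) * (1 - x ^ 3) ^ (-(4/3) : ℝ) := by
      rw [← Real.rpow_one_add' hux.le (by norm_num)]
      norm_num
    rw [this]; ring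
  have hfp_pos : (0:ℝ) < (1 - x ^ 3) ^ (-(4/3) : ℝ) := Real.rpow_pos_of_pos hux _
  -- 1 + (f x)³ = (1-x³)⁻¹
  have hfx3 : 1 + (f x) ^ 3 = (1 - x ^ 3)⁻¹ := by
    simp only [hf]
    rw [mul_pow, ← Real.rpow_natCast ((1 - x ^ 3) ^ (-(1/3) : ℝ)) 3,
      ← Real.rpow_mul hux.le]
    norm_num
    rw [Real.rpow_neg_one]
    field_simp; ring
  rw [hfp, abs_of_pos hfp_pos, hfx3, ← Real.rpow_neg_one (1 - x ^ 3),
    ← Real.rpow_mul hux.le, ← Real.rpow_add hux]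
  norm_num

theorem stmt_18 :
    (∫ t in Ioi (1:ℝ), (t ^ 3 - 1) ^ (-(2/3 : ℝ)))
        = (∫ t in Ioi (0:ℝ), (1 + t ^ 3) ^ (-(2/3 : ℝ)))
    ∧ (∫ t in Ioi (1:ℝ), (t ^ 3 - 1) ^ (-(2/3 : ℝ)))
        = ∫ t in (0:ℝ)..1, (1 - t ^ 3) ^ (-(2/3 : ℝ)) := by
  have h3 : (∫ t in (0:ℝ)..1, (1 - t ^ 3) ^ (-(2/3 : ℝ)))
      = ∫ x in Ioo (0:ℝ) 1, (1 - x ^ 3) ^ (-(2/3 : ℝ)) := by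
    rw [intervalIntegral.integral_of_le zero_le_one, MeasureTheory.integral_Ioc_eq_integral_Ioo]
  exact ⟨step1.trans step2.symm, step1.trans h3.symm⟩
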